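/- Let ř : V ⊗ V → V ⊗ V be an involutive solution of the braid equation (ř² = id) and define Ř(λ) = λ ř + id for λ ∈ ℂ. Then Ř satisfies the parametric braid relation: Ř₁₂(λ₁ − λ₂) Ř₂₃(λ₁) Ř₁₂(λ₂) = Ř₂₃(λ₂) Ř₁₂(λ₁) Ř₂₃(λ₁ − λ₂) on V^{⊗3}, where Ř₁₂ = Ř ⊗ id and Ř₂₃ = id ⊗ Ř. -/
import Mathlib


open TensorProduct

noncomputable section

variable (V : Type*) [AddCommGroup V] [Module ℂ V]

/-- `ř ⊗ id` on `(V ⊗ V) ⊗ V`. -/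
def R12 (rc : V ⊗[ℂ] V →ₗ[ℂ] V ⊗[ℂ] V) : (V ⊗[ℂ] V) ⊗[ℂ] V →ₗ[ℂ] (V ⊗[ℂ] V) ⊗[ℂ] V :=
  LinearMap.rTensor V rc

/-- `id ⊗ ř` on `(V ⊗ V) ⊗ V`, via the associator. -/
def R23 (rc : V ⊗[ℂ] V →ₗ[ℂ] V ⊗[ℂ] V) : (V ⊗[ℂ] V) ⊗[ℂ] V →ₗ[ℂ] (V ⊗[ℂ] V) ⊗[ℂ] V :=
  (TensorProduct.assoc ℂ V V V).symm.toLinearMap ∘ₗ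
    LinearMap.lTensor V rc ∘ₗ (TensorProduct.assoc ℂ V V V).toLinearMap

theorem stmt3 [FiniteDimensional ℂ V]
    (rc : V ⊗[ℂ] V →ₗ[ℂ] V ⊗[ℂ] V)
    (hinv : rc ∘ₗ rc = LinearMap.id)
    (hbraid : R12 V rc ∘ₗ R23 V rc ∘ₗ R12 V rc = R23 V rc ∘ₗ R12 V rc ∘ₗ R23 V rc)
    (lam₁ lam₂ : ℂ) :
    ((lam₁ - lam₂) • R12 V rc + LinearMap.id) ∘ₗ (lam₁ • R23 V rc + LinearMap.id) ∘ₗ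
        (lam₂ • R12 V rc + LinearMap.id)
      = (lam₂ • R23 V rc + LinearMap.id) ∘ₗ (lam₁ • R12 V rc + LinearMap.id) ∘ₗ
        ((lam₁ - lam₂) • R23 V rc + LinearMap.id) := by
  have hA : R12 V rc ∘ₗ R12 V rc = LinearMap.id := by
    simp only [R12, ← LinearMap.rTensor_comp, hinv, LinearMap.rTensor_id]
  have hB : R23 V rc ∘ₗ R23 V rc = LinearMap.id := by
    apply TensorProduct.ext_threefold
    intro x y z
    have h := LinearMap.ext_iff.mp hinv (y ⊗ₜ z)
    simp only [LinearMap.comp_apply, LinearMap.id_apply] at h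
    simp [R23, h]
  simp only [LinearMap.comp_add, LinearMap.add_comp, LinearMap.comp_smul,
    LinearMap.smul_comp, LinearMap.id_comp, LinearMap.comp_id, LinearMap.comp_assoc,
    hA, hB, hbraid]
  module
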